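/- Let R be a shortest closed or open walk in a positively edge-weighted connected multigraph G that starts at s, ends at t, and visits every vertex of a prescribed waypoint set W. Then R traverses each edge of G at most twice. -/
import Mathlib

open SimpleGraph

lemma split_at_dart {V : Type*} {G : SimpleGraph V} :
    ∀ {s t : V} (p : G.Walk s t) {u v : V} (h : G.Adj u v),
      (⟨(u, v), h⟩ : G.Dart) ∈ p.darts →
      ∃ (p₁ : G.Walk s u) (p₂ : G.Walk v t), p = p₁.append (Walk.cons h p₂) := by
  intro s t p
  induction p with
  | nil => intro u v h hd; simp [Walk.darts_nil] at hd
  | cons h' q ih =>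
    intro u v h hd
    rw [Walk.darts_cons, List.mem_cons] at hd
    rcases hd with hd | hd
    · obtain ⟨h1, h2⟩ : u = _ ∧ v = _ := by
        have := congrArg SimpleGraph.Dart.toProd hd
        simpa [Prod.ext_iff] using this
      subst h1; subst h2
      exact ⟨Walk.nil, q, by simp⟩
    · obtain ⟨p₁, p₂, hp⟩ := ih h hd
      exact ⟨Walk.cons h' p₁, p₂, by rw [hp, Walk.cons_append]⟩

lemma split_at_dart_twice {V : Type*} {G : SimpleGraph V} [DecidableEq V]
    {s t u v : V} (p : G.Walk s t) (h : G.Adj u v)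
    (hc : 2 ≤ p.darts.count (⟨(u, v), h⟩ : G.Dart)) :
    ∃ (a : G.Walk s u) (b : G.Walk v u) (c : G.Walk v t),
      p = a.append (Walk.cons h (b.append (Walk.cons h c))) := by
  have hmem : (⟨(u, v), h⟩ : G.Dart) ∈ p.darts := List.count_pos_iff.mp (by omega)
  obtain ⟨p₁, p₂, hp⟩ := split_at_dart p h hmem
  have hcnt : p₁.darts.count (⟨(u, v), h⟩ : G.Dart)
      + (1 + p₂.darts.count (⟨(u, v), h⟩ : G.Dart))
      = p.darts.count (⟨(u, v), h⟩ : G.Dart) := by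
    rw [hp, Walk.darts_append, Walk.darts_cons, List.count_append, List.count_cons]
    simp
    omega
  rcases Nat.lt_or_ge 0 (p₂.darts.count (⟨(u, v), h⟩ : G.Dart)) with h2 | h2
  · obtain ⟨b, c, hp2⟩ := split_at_dart p₂ h (List.count_pos_iff.mp h2)
    exact ⟨p₁, b, c, by rw [hp, hp2]⟩
  · have h1 : 0 < p₁.darts.count (⟨(u, v), h⟩ : G.Dart) := by omega
    obtain ⟨a, b, hp1⟩ := split_at_dart p₁ h (List.count_pos_iff.mp h1)
    refine ⟨a, b, p₂, ?_⟩
    rw [hp, hp1, ← Walk.append_assoc, Walk.cons_append]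

lemma count_map_edge_le {V : Type*} {G : SimpleGraph V} [DecidableEq V]
    (d : G.Dart) : ∀ (l : List G.Dart),
    (l.map SimpleGraph.Dart.edge).count d.edge ≤ l.count d + l.count d.symm := by
  intro l
  induction l with
  | nil => simp
  | cons x xs ih =>
    simp only [List.map_cons, List.count_cons]
    by_cases hx : x.edge = d.edge
    · have : x = d ∨ x = d.symm := (SimpleGraph.dart_edge_eq_iff x d).mp hx
      rcases this with rfl | rfl <;> simp <;> omega
    · have h1 : ¬ x = d := by rintro rfl; exact hx rfl
      have h2 : ¬ x = d.symm := by rintro rfl; exact hx (SimpleGraph.Dart.edge_symm d)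
      simp [hx, h1, h2]; omega

/-- A shortest walk from `s` to `t` visiting all waypoints in a positively
edge-weighted connected graph traverses each edge at most twice. -/
theorem stmt_0 {V : Type*} [Fintype V] [DecidableEq V] (G : SimpleGraph V)
    (hconn : G.Connected) (ω : Sym2 V → ℕ) (hω : ∀ e ∈ G.edgeSet, 1 ≤ ω e)
    (s t : V) (W : Set V) (R : G.Walk s t)
    (hvisit : ∀ w ∈ W, w ∈ R.support)
    (hmin : ∀ q : G.Walk s t, (∀ w ∈ W, w ∈ q.support) →
      (R.edges.map ω).sum ≤ (q.edges.map ω).sum) :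
    ∀ e : Sym2 V, R.edges.count e ≤ 2 := by
  intro e
  by_contra hcon
  push_neg at hcon
  have h3 : 3 ≤ R.edges.count e := hcon
  -- get a dart with this edge
  have hemem : e ∈ R.edges := List.count_pos_iff.mp (by omega)
  rw [Walk.edges, List.mem_map] at hemem
  obtain ⟨d, hdmem, hde⟩ := hemem
  have hle := count_map_edge_le d R.darts
  rw [hde] at hle
  have : 2 ≤ R.darts.count d ∨ 2 ≤ R.darts.count d.symm := by
    rw [← Walk.edges] at hle; omega
  -- pick a dart d' occurring at least twice, with d'.edge = e
  obtain ⟨d', hd'e, hd'c⟩ : ∃ d' : G.Dart, d'.edge = e ∧ 2 ≤ R.darts.count d' := by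
    rcases this with h | h
    · exact ⟨d, hde, h⟩
    · exact ⟨d.symm, by rw [SimpleGraph.Dart.edge_symm, hde], h⟩
  obtain ⟨⟨u, v⟩, hadj⟩ := d'
  obtain ⟨a, b, c, hR⟩ := split_at_dart_twice R hadj hd'c
  -- the shorter walk
  set q : G.Walk s t := a.append (b.reverse.append c) with hq
  have hvq : ∀ w ∈ W, w ∈ q.support := by
    intro w hw
    have := hvisit w hw
    rw [hR] at this
    simp only [Walk.mem_support_append_iff, Walk.support_cons, List.mem_cons] at this
    have hub : u ∈ b.support := Walk.end_mem_support b
    simp only [hq, Walk.mem_support_append_iff, Walk.support_reverse, List.mem_reverse]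
    rcases this with h | h | h | h | h
    · exact Or.inl h
    · exact Or.inr (Or.inl (h ▸ hub))
    · exact Or.inr (Or.inl h)
    · exact Or.inr (Or.inl (h ▸ hub))
    · exact Or.inr (Or.inr h)
  have hlen := hmin q hvq
  have hRsum : (R.edges.map ω).sum
      = (a.edges.map ω).sum + (ω s(u, v) + ((b.edges.map ω).sum
        + (ω s(u, v) + (c.edges.map ω).sum))) := by
    rw [hR]
    simp [Walk.edges_append, Walk.edges_cons, List.map_append, List.sum_append]
  have hqsum : (q.edges.map ω).sum
      = (a.edges.map ω).sum + ((b.edges.map ω).sum + (c.edges.map ω).sum) := by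
    simp [hq, Walk.edges_append, Walk.edges_reverse, List.map_append, List.sum_append,
      List.map_reverse, List.sum_reverse]
  have hω1 : 1 ≤ ω s(u, v) := hω _ (G.mem_edgeSet.mpr hadj)
  omega
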